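/- (Markov gluing of measures) Let B be the Boolean algebra freely generated by A_1,…,A_n, B_1 the subalgebra generated by A_1,…,A_k and B_2 the subalgebra generated by A_i,…,A_n with 1 ≤ i ≤ k ≤ n. If μ_1 and μ_2 are normalized measures on B_1, B_2 that coincide on B_1 ∩ B_2, then there is a normalized measure μ on B extending both. -/

import Mathlib

def IsNormMeasure {B : Type*} [BooleanAlgebra B] (m : B → ℝ) : Prop :=
  (∀ x, 0 ≤ m x) ∧ (∀ x y : B, x ⊓ y = ⊥ → m (x ⊔ y) = m x + m y) ∧ m ⊤ = 1

def IsMeasureOn {B : Type*} [BooleanAlgebra B] (m : B → ℝ) (S : Set B) : Prop :=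
  (∀ x ∈ S, 0 ≤ m x) ∧
  (∀ x ∈ S, ∀ y ∈ S, x ⊓ y = ⊥ → m (x ⊔ y) = m x + m y) ∧ m ⊤ = 1

def subalgClosure {B : Type*} [BooleanAlgebra B] (G : Set B) : Set B :=
  ⋂₀ {S : Set B | G ⊆ S ∧ (⊤ : B) ∈ S ∧ (⊥ : B) ∈ S ∧ (∀ x ∈ S, xᶜ ∈ S) ∧
      (∀ x ∈ S, ∀ y ∈ S, x ⊓ y ∈ S) ∧ (∀ x ∈ S, ∀ y ∈ S, x ⊔ y ∈ S)}

def IsFreelyGeneratedBy {n : ℕ} {B : Type*} [BooleanAlgebra B] (A : Fin n → B) : Prop :=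
  ∀ (C : Type) [BooleanAlgebra C], ∀ g : Fin n → C,
    ∃! φ : BoundedLatticeHom B C, ∀ i, φ (A i) = g i

open Finset

namespace SG

variable {B : Type*} [BooleanAlgebra B]

lemma sc_induction {G : Set B} {P : B → Prop}
    (hG : ∀ x ∈ G, P x) (htop : P ⊤) (hbot : P ⊥)
    (hc : ∀ x, P x → P xᶜ)
    (hinf : ∀ x, P x → ∀ y, P y → P (x ⊓ y))
    (hsup : ∀ x, P x → ∀ y, P y → P (x ⊔ y)) :
    ∀ x ∈ subalgClosure G, P x := fun _x hx =>
  Set.mem_sInter.mp hx {y | P y} ⟨hG, htop, hbot, hc, hinf, hsup⟩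

lemma sc_sub {G : Set B} : G ⊆ subalgClosure G :=
  fun _x hx => Set.mem_sInter.mpr fun _T hT => hT.1 hx

lemma sc_top {G : Set B} : (⊤ : B) ∈ subalgClosure G :=
  Set.mem_sInter.mpr fun _T hT => hT.2.1

lemma sc_bot {G : Set B} : (⊥ : B) ∈ subalgClosure G :=
  Set.mem_sInter.mpr fun _T hT => hT.2.2.1

lemma sc_compl {G : Set B} {x : B} (hx : x ∈ subalgClosure G) : xᶜ ∈ subalgClosure G :=
  Set.mem_sInter.mpr fun T hT => hT.2.2.2.1 x (Set.mem_sInter.mp hx T hT)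

lemma sc_inf {G : Set B} {x y : B} (hx : x ∈ subalgClosure G) (hy : y ∈ subalgClosure G) :
    x ⊓ y ∈ subalgClosure G :=
  Set.mem_sInter.mpr fun T hT =>
    hT.2.2.2.2.1 x (Set.mem_sInter.mp hx T hT) y (Set.mem_sInter.mp hy T hT)

lemma sc_sup {G : Set B} {x y : B} (hx : x ∈ subalgClosure G) (hy : y ∈ subalgClosure G) :
    x ⊔ y ∈ subalgClosure G :=
  Set.mem_sInter.mpr fun T hT =>
    hT.2.2.2.2.2 x (Set.mem_sInter.mp hx T hT) y (Set.mem_sInter.mp hy T hT)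

lemma sc_mono {G G' : Set B} (h : G ⊆ G') : subalgClosure G ⊆ subalgClosure G' := by
  intro x hx
  refine sc_induction (G := G) (P := fun y => y ∈ subalgClosure G') ?_ sc_top sc_bot
    (fun _ => sc_compl) (fun _ ha _ hb => sc_inf ha hb) (fun _ ha _ hb => sc_sup ha hb) x hx
  exact fun y hy => sc_sub (h hy)

lemma phi_compl {C : Type*} [BooleanAlgebra C] (φ : BoundedLatticeHom B C) (x : B) :
    φ xᶜ = (φ x)ᶜ := by
  have h1 : φ x ⊓ φ xᶜ = ⊥ := by rw [← map_inf, inf_compl_eq_bot, map_bot]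
  have h2 : φ x ⊔ φ xᶜ = ⊤ := by rw [← map_sup, sup_compl_eq_top, map_top]
  exact ((IsCompl.of_eq h1 h2).compl_eq).symm

lemma mem_finset_inf_set {ι α : Type*} (s : Finset ι) (f : ι → Set α) (x : α) :
    x ∈ s.inf f ↔ ∀ j ∈ s, x ∈ f j := by
  classical
  induction s using Finset.induction_on with
  | empty => simp [Set.top_eq_univ]
  | @insert a s ha ih => simp [Finset.inf_insert, ih]

end SG

namespace SG2

variable {n : ℕ} {B : Type*} [BooleanAlgebra B]

/-- canonical pattern: truncate a boolean vector to `S`. -/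
def pat (S : Finset (Fin n)) (δ : Fin n → Bool) : Fin n → Bool :=
  fun j => if j ∈ S then δ j else false

lemma pat_mem {S : Finset (Fin n)} {j : Fin n} (h : j ∈ S) (δ : Fin n → Bool) :
    pat S δ j = δ j := if_pos h

lemma pat_not_mem {S : Finset (Fin n)} {j : Fin n} (h : j ∉ S) (δ : Fin n → Bool) :
    pat S δ j = false := if_neg h

lemma pat_idem (S : Finset (Fin n)) (δ : Fin n → Bool) : pat S (pat S δ) = pat S δ := by
  funext j; by_cases h : j ∈ S <;> simp [pat, h]

lemma pat_sub {S0 S : Finset (Fin n)} (h : S0 ⊆ S) (δ : Fin n → Bool) :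
    pat S0 (pat S δ) = pat S0 δ := by
  funext j
  by_cases h0 : j ∈ S0
  · simp [pat, h0, h h0]
  · simp [pat, h0]

/-- the atom of the subalgebra generated by `A j, j ∈ S`, with sign pattern `δ`. -/
def atomOf (A : Fin n → B) (S : Finset (Fin n)) (δ : Fin n → Bool) : B :=
  S.inf fun j => if δ j then A j else (A j)ᶜ

lemma at_congr {A : Fin n → B} {S : Finset (Fin n)} {δ δ' : Fin n → Bool}
    (h : ∀ j ∈ S, δ j = δ' j) : atomOf A S δ = atomOf A S δ' :=
  Finset.inf_congr rfl fun j hj => by rw [h j hj]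

lemma at_pat {A : Fin n → B} (S : Finset (Fin n)) (δ : Fin n → Bool) :
    atomOf A S (pat S δ) = atomOf A S δ :=
  at_congr fun j hj => pat_mem hj δ

lemma at_insert {A : Fin n → B} {S : Finset (Fin n)} {j : Fin n} (δ : Fin n → Bool) :
    atomOf A (insert j S) δ = (if δ j then A j else (A j)ᶜ) ⊓ atomOf A S δ :=
  Finset.inf_insert

lemma at_disj {A : Fin n → B} {S : Finset (Fin n)} {δ δ' : Fin n → Bool} {j : Fin n}
    (hj : j ∈ S) (hne : δ j ≠ δ' j) : atomOf A S δ ⊓ atomOf A S δ' = ⊥ := by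
  have h1 : atomOf A S δ ≤ if δ j then A j else (A j)ᶜ := Finset.inf_le hj
  have h2 : atomOf A S δ' ≤ if δ' j then A j else (A j)ᶜ := Finset.inf_le hj
  refine le_bot_iff.mp ((inf_le_inf h1 h2).trans ?_)
  cases hb : δ j <;> cases hb' : δ' j <;> simp_all

lemma at_cover (A : Fin n → B) (S : Finset (Fin n)) :
    (Finset.univ : Finset (Fin n → Bool)).sup (atomOf A S) = ⊤ := by
  classical
  induction S using Finset.induction_on with
  | empty =>
      have hne : (Finset.univ : Finset (Fin n → Bool)).Nonempty := ⟨fun _ => false, mem_univ _⟩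
      rw [show atomOf A (∅ : Finset (Fin n)) = fun _ => ⊤ from rfl] at *
      exact Finset.sup_const hne ⊤
  | @insert j S hj IH =>
      refine top_le_iff.mp ?_
      rw [← IH]
      refine Finset.sup_le fun δ _ => ?_
      have htrue : atomOf A (insert j S) (Function.update δ j true) = A j ⊓ atomOf A S δ := by
        rw [at_insert, Function.update_self, if_pos rfl]
        congr 1
        exact at_congr fun m hm => Function.update_of_ne (by rintro rfl; exact hj hm) _ _
      have hfalse : atomOf A (insert j S) (Function.update δ j false) = (A j)ᶜ ⊓ atomOf A S δ := by
        rw [at_insert, Function.update_self, if_neg (by simp)]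
        congr 1
        exact at_congr fun m hm => Function.update_of_ne (by rintro rfl; exact hj hm) _ _
      calc atomOf A S δ = (A j ⊓ atomOf A S δ) ⊔ ((A j)ᶜ ⊓ atomOf A S δ) := by
            rw [← inf_sup_right, sup_compl_eq_top, top_inf_eq]
        _ ≤ _ := sup_le
            (htrue ▸ Finset.le_sup (mem_univ _))
            (hfalse ▸ Finset.le_sup (mem_univ _))

lemma at_mem {A : Fin n → B} {S : Finset (Fin n)} {G : Set B}
    (h : ∀ j ∈ S, A j ∈ subalgClosure G) (δ : Fin n → Bool) :
    atomOf A S δ ∈ subalgClosure G := by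
  classical
  induction S using Finset.induction_on with
  | empty => simpa [atomOf] using SG.sc_top
  | @insert j S hj IH =>
      rw [at_insert]
      refine SG.sc_inf ?_ (IH fun m hm => h m (mem_insert_of_mem hm))
      cases hb : δ j
      · simpa [hb] using SG.sc_compl (h j (mem_insert_self j S))
      · simpa [hb] using h j (mem_insert_self j S)

end SG2
namespace SG3

open SG SG2

variable {n : ℕ} {B : Type*} [BooleanAlgebra B]

section
variable (A : Fin n → B) (φ : BoundedLatticeHom B (Set (Fin n → Bool)))
variable (hφ : ∀ j, φ (A j) = {ε | ε j = true})

lemma phi_at (hφ : ∀ j, φ (A j) = {ε | ε j = true}) (S : Finset (Fin n)) (δ ε : Fin n → Bool) :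
    ε ∈ φ (atomOf A S δ) ↔ ∀ j ∈ S, ε j = δ j := by
  rw [atomOf, map_finset_inf, mem_finset_inf_set]
  refine forall₂_congr fun j hj => ?_
  cases hb : δ j <;>
    simp [hb, Function.comp_def, phi_compl, hφ j, Set.mem_setOf_eq, Bool.not_eq_true]

open scoped Classical in
/-- The key structural lemma: elements of the subalgebra generated by `A j, j ∈ S`
depend only on coordinates in `S` and are sups of the atoms below them. -/
lemma key (hφ : ∀ j, φ (A j) = {ε | ε j = true}) (S : Finset (Fin n)) :
    ∀ x ∈ subalgClosure (A '' {j | j ∈ S}),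
      (∀ δ ε : Fin n → Bool, (∀ j ∈ S, δ j = ε j) → (δ ∈ φ x ↔ ε ∈ φ x)) ∧
      x = (univ.filter (· ∈ φ x)).sup (atomOf A S) := by
  have hpair : ∀ (p q : (Fin n → Bool) → Prop) (c : B),
      (∀ δ ε, p δ → q ε → atomOf A S δ ⊓ atomOf A S ε ≤ c) →
      (univ.filter p).sup (atomOf A S) ⊓ (univ.filter q).sup (atomOf A S) ≤ c := by
    intro p q c h
    rw [Finset.sup_inf_distrib_right]
    refine Finset.sup_le fun δ hδ => ?_
    rw [Finset.sup_inf_distrib_left]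
    exact Finset.sup_le fun ε hε => h _ _ (mem_filter.mp hδ).2 (mem_filter.mp hε).2
  refine sc_induction ?_ ?_ ?_ ?_ ?_ ?_
  · -- generators
    rintro x ⟨j, hj, rfl⟩
    simp only [Set.mem_setOf_eq] at hj
    constructor
    · intro δ ε hagree
      simp [hφ j, Set.mem_setOf_eq, hagree j hj]
    · refine le_antisymm ?_ (Finset.sup_le fun δ hδ => ?_)
      · calc A j = A j ⊓ ⊤ := (inf_top_eq _).symm
          _ = A j ⊓ univ.sup (atomOf A S) := by rw [at_cover]
          _ = univ.sup (fun δ => A j ⊓ atomOf A S δ) := Finset.sup_inf_distrib_left _ _ _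
          _ ≤ _ := by
            refine Finset.sup_le fun δ _ => ?_
            cases hb : δ j
            · have hle : atomOf A S δ ≤ (A j)ᶜ := by
                simpa [atomOf, hb] using
                  Finset.inf_le (f := fun m => if δ m then A m else (A m)ᶜ) hj
              calc A j ⊓ atomOf A S δ ≤ A j ⊓ (A j)ᶜ := inf_le_inf_left _ hle
                _ = ⊥ := inf_compl_eq_bot
                _ ≤ _ := bot_le
            · have hmem : δ ∈ univ.filter (· ∈ φ (A j)) := by
                simp [hφ j, Set.mem_setOf_eq, hb]
              exact inf_le_right.trans (Finset.le_sup hmem)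
      · have hδ' : δ j = true := by simpa [hφ j, Set.mem_setOf_eq] using (mem_filter.mp hδ).2
        simpa [atomOf, hδ'] using Finset.inf_le (f := fun m => if δ m then A m else (A m)ᶜ) hj
  · -- top
    refine ⟨fun δ ε _ => by simp [map_top], ?_⟩
    have : (univ.filter (· ∈ φ (⊤ : B))) = (univ : Finset (Fin n → Bool)) := by
      refine Finset.filter_true_of_mem fun δ _ => ?_
      simp [map_top]
    rw [this, at_cover]
  · -- bot
    refine ⟨fun δ ε _ => by simp [map_bot], ?_⟩
    have : (univ.filter (· ∈ φ (⊥ : B))) = (∅ : Finset (Fin n → Bool)) := by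
      refine Finset.filter_false_of_mem fun δ _ => ?_
      simp [map_bot]
    rw [this, Finset.sup_empty]
  · -- compl
    rintro x ⟨hdep, hrep⟩
    have hc : φ xᶜ = (φ x)ᶜ := phi_compl φ x
    constructor
    · intro δ ε hagree
      rw [hc, Set.mem_compl_iff, Set.mem_compl_iff]
      exact not_congr (hdep δ ε hagree)
    · have hdisj : (univ.filter (· ∈ φ x)).sup (atomOf A S) ⊓
          (univ.filter (· ∈ φ xᶜ)).sup (atomOf A S) ≤ ⊥ := by
        refine hpair _ _ _ fun δ ε hδ hε => ?_
        have hne : ∃ j ∈ S, δ j ≠ ε j := by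
          by_contra hcon
          push_neg at hcon
          exact (hc ▸ hε : ε ∈ (φ x)ᶜ) ((hdep δ ε hcon).mp hδ)
        obtain ⟨j, hj, hne⟩ := hne
        exact (at_disj hj hne).le
      have hcod : (univ.filter (· ∈ φ x)).sup (atomOf A S) ⊔
          (univ.filter (· ∈ φ xᶜ)).sup (atomOf A S) = ⊤ := by
        rw [← Finset.sup_union]
        rw [← at_cover A S]
        congr 1
        refine Finset.ext fun δ => ?_
        simp only [Finset.mem_union, Finset.mem_filter, Finset.mem_univ, true_and]
        constructor
        · intro _; trivial
        · intro _
          by_cases hb : δ ∈ φ x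
          · exact Or.inl hb
          · exact Or.inr (by rw [hc]; exact hb)
      have hic : IsCompl ((univ.filter (· ∈ φ x)).sup (atomOf A S))
          ((univ.filter (· ∈ φ xᶜ)).sup (atomOf A S)) :=
        IsCompl.of_eq (le_bot_iff.mp hdisj) hcod
      calc xᶜ = ((univ.filter (· ∈ φ x)).sup (atomOf A S))ᶜ := by rw [← hrep]
        _ = _ := hic.compl_eq
  · -- inf
    rintro x ⟨hdepx, hrepx⟩ y ⟨hdepy, hrepy⟩
    constructor
    · intro δ ε hagree
      rw [map_inf]
      simp only [Set.inf_eq_inter, Set.mem_inter_iff]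
      exact and_congr (hdepx δ ε hagree) (hdepy δ ε hagree)
    · refine le_antisymm ?_ (Finset.sup_le fun δ hδ => ?_)
      · calc x ⊓ y = (univ.filter (· ∈ φ x)).sup (atomOf A S) ⊓
              (univ.filter (· ∈ φ y)).sup (atomOf A S) := by rw [← hrepx, ← hrepy]
          _ ≤ _ := by
            refine hpair _ _ _ fun δ ε hδ hε => ?_
            by_cases hagree : ∀ j ∈ S, δ j = ε j
            · have hδy : δ ∈ φ y := (hdepy δ ε hagree).mpr hε
              have hmem : δ ∈ univ.filter (· ∈ φ (x ⊓ y)) := by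
                simp only [Finset.mem_filter, Finset.mem_univ, true_and, map_inf]
                exact ⟨hδ, hδy⟩
              exact inf_le_left.trans (Finset.le_sup hmem)
            · push_neg at hagree
              obtain ⟨j, hj, hne⟩ := hagree
              exact (at_disj hj hne).le.trans bot_le
      · have hδ' := (mem_filter.mp hδ).2
        rw [map_inf] at hδ'
        simp only [Set.inf_eq_inter, Set.mem_inter_iff] at hδ'
        refine le_inf ?_ ?_
        · rw [hrepx]
          exact Finset.le_sup (by simp only [Finset.mem_filter, Finset.mem_univ, true_and]; exact hδ'.1)
        · rw [hrepy]
          exact Finset.le_sup (by simp only [Finset.mem_filter, Finset.mem_univ, true_and]; exact hδ'.2)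
  · -- sup
    rintro x ⟨hdepx, hrepx⟩ y ⟨hdepy, hrepy⟩
    constructor
    · intro δ ε hagree
      rw [map_sup]
      simp only [Set.sup_eq_union, Set.mem_union]
      exact or_congr (hdepx δ ε hagree) (hdepy δ ε hagree)
    · have hfil : univ.filter (· ∈ φ (x ⊔ y)) =
          univ.filter (· ∈ φ x) ∪ univ.filter (· ∈ φ y) := by
        refine Finset.ext fun δ => ?_
        simp [map_sup, Set.sup_eq_union, Set.mem_union]
      rw [hfil, Finset.sup_union, ← hrepx, ← hrepy]
end

end SG3
namespace SG4
open SG SG2 SG3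

variable {n : ℕ} {B : Type*} [BooleanAlgebra B]

lemma meas_bot {G : Set B} {m : B → ℝ} (hm : IsMeasureOn m (subalgClosure G)) : m ⊥ = 0 := by
  have h := hm.2.1 ⊥ SG.sc_bot ⊥ SG.sc_bot (by simp)
  simp only [sup_idem] at h
  linarith

lemma meas_sum {G : Set B} {m : B → ℝ} (hm : IsMeasureOn m (subalgClosure G))
    {ι : Type*} [DecidableEq ι] (P : Finset ι) (a : ι → B)
    (ha : ∀ p ∈ P, a p ∈ subalgClosure G)
    (hd : ∀ p ∈ P, ∀ q ∈ P, p ≠ q → a p ⊓ a q = ⊥) :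
    m (P.sup a) = ∑ p ∈ P, m (a p) := by
  classical
  suffices h : P.sup a ∈ subalgClosure G ∧ m (P.sup a) = ∑ p ∈ P, m (a p) from h.2
  induction P using Finset.induction_on with
  | empty => exact ⟨SG.sc_bot, by simp [meas_bot hm]⟩
  | @insert p P hp IH =>
      have IH' := IH (fun q hq => ha q (mem_insert_of_mem hq))
        (fun q hq r hr h => hd q (mem_insert_of_mem hq) r (mem_insert_of_mem hr) h)
      have hdisj : a p ⊓ P.sup a = ⊥ := by
        rw [Finset.sup_inf_distrib_left]
        refine le_bot_iff.mp (Finset.sup_le fun q hq => ?_)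
        exact (hd p (mem_insert_self _ _) q (mem_insert_of_mem hq)
          (by rintro rfl; exact hp hq)).le
      refine ⟨?_, ?_⟩
      · rw [Finset.sup_insert]; exact SG.sc_sup (ha p (mem_insert_self _ _)) IH'.1
      · rw [Finset.sup_insert, hm.2.1 _ (ha p (mem_insert_self _ _)) _ IH'.1 hdisj,
          Finset.sum_insert hp, IH'.2]

open scoped Classical in
/-- the set of canonical `S`-patterns occurring in `x`. -/
noncomputable def PatSet (φ : BoundedLatticeHom B (Set (Fin n → Bool)))
    (S : Finset (Fin n)) (x : B) : Finset (Fin n → Bool) :=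
  (univ.filter (· ∈ φ x)).image (pat S)

lemma mem_PatSet {φ : BoundedLatticeHom B (Set (Fin n → Bool))} {S : Finset (Fin n)}
    {x : B} {δ : Fin n → Bool}
    (hdep : ∀ δ ε : Fin n → Bool, (∀ j ∈ S, δ j = ε j) → (δ ∈ φ x ↔ ε ∈ φ x)) :
    δ ∈ PatSet φ S x ↔ pat S δ = δ ∧ δ ∈ φ x := by
  unfold PatSet
  simp only [Finset.mem_image, Finset.mem_filter, Finset.mem_univ, true_and]
  constructor
  · rintro ⟨ε, hε, rfl⟩
    exact ⟨pat_idem S ε, (hdep ε (pat S ε) (fun j hj => (pat_mem hj ε).symm)).mp hε⟩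
  · rintro ⟨h1, h2⟩; exact ⟨δ, h2, h1⟩

lemma decomp {A : Fin n → B} {φ : BoundedLatticeHom B (Set (Fin n → Bool))}
    (hφ : ∀ j, φ (A j) = {ε | ε j = true}) {S S' : Finset (Fin n)} (hSS' : S ⊆ S')
    {m : B → ℝ} (hm : IsMeasureOn m (subalgClosure (A '' {j | j ∈ S'})))
    {x : B} (hx : x ∈ subalgClosure (A '' {j | j ∈ S})) :
    m x = ∑ δ ∈ PatSet φ S x, m (atomOf A S δ) := by
  classical
  obtain ⟨hdep, hrep⟩ := key A φ hφ S x hx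
  have hx' : x = (PatSet φ S x).sup (atomOf A S) := by
    rw [PatSet, Finset.sup_image]
    calc x = (univ.filter (· ∈ φ x)).sup (atomOf A S) := hrep
      _ = _ := (Finset.sup_congr rfl fun δ _ => (at_pat S δ).symm)
  have hAmem : ∀ j ∈ S, A j ∈ subalgClosure (A '' {j | j ∈ S'}) :=
    fun j hj => SG.sc_sub ⟨j, hSS' hj, rfl⟩
  rw [show m x = m ((PatSet φ S x).sup (atomOf A S)) from by rw [← hx']]
  refine meas_sum hm _ _ (fun δ _ => at_mem hAmem δ) ?_
  intro δ hδ ε hε hne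
  have hδc := ((mem_PatSet hdep).mp hδ).1
  have hεc := ((mem_PatSet hdep).mp hε).1
  have hj : ∃ j ∈ S, δ j ≠ ε j := by
    by_contra hcon
    push_neg at hcon
    refine hne (funext fun j => ?_)
    by_cases hjS : j ∈ S
    · exact hcon j hjS
    · rw [← hδc, ← hεc, pat_not_mem hjS, pat_not_mem hjS]
  obtain ⟨j, hjS, hne'⟩ := hj
  exact at_disj hjS hne'

end SG4
namespace SG5
open SG2

variable {n : ℕ}

open scoped Classical in
lemma fiber_sum (Sa Sb : Finset (Fin n)) (hU : ∀ j, j ∉ Sa → j ∈ Sb)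
    (ga gb g0 : (Fin n → Bool) → ℝ)
    (hgb : ∀ δ0, pat (Sa ∩ Sb) δ0 = δ0 →
      ∑ δ2 ∈ univ.filter (fun δ2 => pat Sb δ2 = δ2 ∧ pat (Sa ∩ Sb) δ2 = δ0), gb δ2 = g0 δ0)
    (hzero : ∀ δ, pat Sa δ = δ → g0 (pat (Sa ∩ Sb) δ) = 0 → ga δ = 0)
    (δ : Fin n → Bool) (hδ : pat Sa δ = δ) :
    ∑ ε ∈ univ.filter (fun ε => pat Sa ε = δ),
      ga (pat Sa ε) * (gb (pat Sb ε) * (g0 (pat (Sa ∩ Sb) ε))⁻¹) = ga δ := by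
  set S0 := Sa ∩ Sb with hS0
  set δ0 := pat S0 δ with hδ0
  have hfib0 : ∀ ε, pat Sa ε = δ → pat S0 ε = δ0 := by
    intro ε hε
    rw [hδ0, ← hε, pat_sub inter_subset_left]
  have step1 : ∑ ε ∈ univ.filter (fun ε => pat Sa ε = δ),
      ga (pat Sa ε) * (gb (pat Sb ε) * (g0 (pat S0 ε))⁻¹)
      = ga δ * ((∑ ε ∈ univ.filter (fun ε => pat Sa ε = δ), gb (pat Sb ε)) * (g0 δ0)⁻¹) := by
    calc ∑ ε ∈ univ.filter (fun ε => pat Sa ε = δ),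
        ga (pat Sa ε) * (gb (pat Sb ε) * (g0 (pat S0 ε))⁻¹)
        = ∑ ε ∈ univ.filter (fun ε => pat Sa ε = δ),
            ga δ * (gb (pat Sb ε) * (g0 δ0)⁻¹) := by
          refine Finset.sum_congr rfl fun ε hε => ?_
          rw [(Finset.mem_filter.mp hε).2, hfib0 ε (Finset.mem_filter.mp hε).2]
      _ = ga δ * ∑ ε ∈ univ.filter (fun ε => pat Sa ε = δ),
            gb (pat Sb ε) * (g0 δ0)⁻¹ := (Finset.mul_sum _ _ _).symm
      _ = _ := by rw [← Finset.sum_mul]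
  have step2 : ∑ ε ∈ univ.filter (fun ε => pat Sa ε = δ), gb (pat Sb ε)
      = ∑ δ2 ∈ univ.filter (fun δ2 => pat Sb δ2 = δ2 ∧ pat S0 δ2 = δ0), gb δ2 := by
    refine Finset.sum_nbij' (i := fun ε => pat Sb ε)
      (j := fun δ2 j => if j ∈ Sa then δ j else δ2 j) ?_ ?_ ?_ ?_ ?_
    · intro ε hε
      have hε' : pat Sa ε = δ := (Finset.mem_filter.mp hε).2
      simp only [Finset.mem_filter, Finset.mem_univ, true_and]
      refine ⟨pat_idem _ _, ?_⟩
      rw [hS0, pat_sub inter_subset_right, ← hS0, hfib0 ε hε']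
    · intro δ2 hδ2
      simp only [Finset.mem_filter, Finset.mem_univ, true_and] at hδ2 ⊢
      funext j
      by_cases ha : j ∈ Sa
      · rw [pat_mem ha]; simp only [if_pos ha]
      · rw [pat_not_mem ha, ← hδ, pat_not_mem ha]
    · intro ε hε
      have hε' : pat Sa ε = δ := (Finset.mem_filter.mp hε).2
      funext j
      show (if j ∈ Sa then δ j else pat Sb ε j) = ε j
      by_cases ha : j ∈ Sa
      · simp only [if_pos ha, ← hε', pat_mem ha]
      · simp only [if_neg ha, pat_mem (hU j ha)]
    · intro δ2 hδ2
      simp only [Finset.mem_filter, Finset.mem_univ, true_and] at hδ2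
      obtain ⟨hc, h0⟩ := hδ2
      funext j
      show pat Sb (fun j => if j ∈ Sa then δ j else δ2 j) j = δ2 j
      by_cases hb : j ∈ Sb
      · rw [pat_mem hb]
        by_cases ha : j ∈ Sa
        · have hjS0 : j ∈ S0 := Finset.mem_inter.mpr ⟨ha, hb⟩
          have e1 : δ2 j = δ0 j := by rw [← h0, pat_mem hjS0]
          have e2 : δ0 j = δ j := by rw [hδ0, pat_mem hjS0]
          simp [ha, e1, e2]
        · simp [ha]
      · rw [pat_not_mem hb, ← hc, pat_not_mem hb]
    · intro ε hε; rfl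
  rw [step1, step2, hgb δ0 (pat_idem S0 δ)]
  by_cases h0 : g0 δ0 = 0
  · rw [h0]
    simp [hzero δ hδ (hδ0 ▸ h0)]
  · rw [mul_inv_cancel₀ h0, mul_one]

end SG5
namespace SG6
open SG SG2 SG3 SG4

variable {n : ℕ} {B : Type*} [BooleanAlgebra B]

open scoped Classical in
lemma ext_side {A : Fin n → B} {φ : BoundedLatticeHom B (Set (Fin n → Bool))}
    (hφ : ∀ j, φ (A j) = {ε | ε j = true}) {Sa : Finset (Fin n)} {m : B → ℝ}
    (hm : IsMeasureOn m (subalgClosure (A '' {j | j ∈ Sa})))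
    (f : (Fin n → Bool) → ℝ)
    (hfib : ∀ δ, pat Sa δ = δ →
      ∑ ε ∈ univ.filter (fun ε => pat Sa ε = δ), f ε = m (atomOf A Sa δ)) :
    ∀ x ∈ subalgClosure (A '' {j | j ∈ Sa}),
      ∑ ε ∈ univ.filter (· ∈ φ x), f ε = m x := by
  intro x hx
  obtain ⟨hdep, -⟩ := key A φ hφ Sa x hx
  rw [decomp hφ (subset_refl Sa) hm hx]
  rw [← Finset.sum_fiberwise_of_maps_to (g := pat Sa) (t := PatSet φ Sa x) ?_ f]
  · refine Finset.sum_congr rfl fun δ hδ => ?_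
    have hδ' := (mem_PatSet hdep).mp hδ
    have hfil : (univ.filter (· ∈ φ x)).filter (fun ε => pat Sa ε = δ)
        = univ.filter (fun ε => pat Sa ε = δ) := by
      ext ε
      simp only [Finset.mem_filter, Finset.mem_univ, true_and, and_iff_right_iff_imp]
      intro hε
      refine (hdep ε δ fun j hj => ?_).mpr hδ'.2
      rw [← hε, pat_mem hj]
    rw [hfil, hfib δ hδ'.1]
  · intro ε hε
    exact Finset.mem_image.mpr ⟨ε, hε, rfl⟩

end SG6

/-- Markov gluing of measures: with `B` free on `A_1, …, A_n`, `B_1` generated by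
`A_1, …, A_k` and `B_2` by `A_i, …, A_n` (`1 ≤ i ≤ k ≤ n`), two normalized measures on
`B_1` and `B_2` agreeing on `B_1 ∩ B_2` have a common extension to a normalized measure
on `B`.  Generators are indexed by `Fin n`, so `A_j` is `A ⟨j-1, _⟩`. -/
theorem stmt10 {n i k : ℕ} (hi : 1 ≤ i) (hik : i ≤ k) (hkn : k ≤ n)
    (B : Type*) [BooleanAlgebra B] (A : Fin n → B) (hA : IsFreelyGeneratedBy A)
    (μ1 μ2 : B → ℝ)
    (h1 : IsMeasureOn μ1 (subalgClosure (A '' {j : Fin n | (j : ℕ) < k})))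
    (h2 : IsMeasureOn μ2 (subalgClosure (A '' {j : Fin n | i ≤ (j : ℕ) + 1})))
    (hagree : ∀ x ∈ subalgClosure (A '' {j : Fin n | (j : ℕ) < k}) ∩
        subalgClosure (A '' {j : Fin n | i ≤ (j : ℕ) + 1}), μ1 x = μ2 x) :
    ∃ μ : B → ℝ, IsNormMeasure μ ∧
      (∀ x ∈ subalgClosure (A '' {j : Fin n | (j : ℕ) < k}), μ x = μ1 x) ∧
      (∀ x ∈ subalgClosure (A '' {j : Fin n | i ≤ (j : ℕ) + 1}), μ x = μ2 x) := by
  classical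
  open SG SG2 SG3 SG4 SG5 SG6 in
  obtain ⟨φ, hφ, -⟩ := hA (Set (Fin n → Bool)) fun j => {ε | ε j = true}
  set S1 : Finset (Fin n) := univ.filter (fun j => (j : ℕ) < k) with hS1
  set S2 : Finset (Fin n) := univ.filter (fun j => i ≤ (j : ℕ) + 1) with hS2
  have hset1 : {j : Fin n | (j : ℕ) < k} = {j | j ∈ S1} := by ext j; simp [hS1]
  have hset2 : {j : Fin n | i ≤ (j : ℕ) + 1} = {j | j ∈ S2} := by ext j; simp [hS2]
  rw [hset1] at h1 hagree ⊢
  rw [hset2] at h2 hagree ⊢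
  have hU12 : ∀ j : Fin n, j ∉ S1 → j ∈ S2 := by
    intro j hj
    simp only [hS1, hS2, Finset.mem_filter, Finset.mem_univ, true_and, not_lt] at hj ⊢
    omega
  have hU21 : ∀ j : Fin n, j ∉ S2 → j ∈ S1 := by
    intro j hj
    simp only [hS1, hS2, Finset.mem_filter, Finset.mem_univ, true_and, not_le] at hj ⊢
    omega
  have h01 : S1 ∩ S2 ⊆ S1 := inter_subset_left
  have h02 : S1 ∩ S2 ⊆ S2 := inter_subset_right
  have h21 : S2 ∩ S1 = S1 ∩ S2 := inter_comm _ _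
  -- membership facts
  have hat1 : ∀ δ, atomOf A S1 δ ∈ subalgClosure (A '' {j | j ∈ S1}) :=
    at_mem fun j hj => SG.sc_sub ⟨j, hj, rfl⟩
  have hat2 : ∀ δ, atomOf A S2 δ ∈ subalgClosure (A '' {j | j ∈ S2}) :=
    at_mem fun j hj => SG.sc_sub ⟨j, hj, rfl⟩
  have hat00 : ∀ δ, atomOf A (S1 ∩ S2) δ ∈ subalgClosure (A '' {j | j ∈ S1 ∩ S2}) :=
    at_mem fun j hj => SG.sc_sub ⟨j, hj, rfl⟩
  have hat01 : ∀ δ, atomOf A (S1 ∩ S2) δ ∈ subalgClosure (A '' {j | j ∈ S1}) :=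
    fun δ => SG.sc_mono (Set.image_mono fun j hj => h01 hj) (hat00 δ)
  have hat02 : ∀ δ, atomOf A (S1 ∩ S2) δ ∈ subalgClosure (A '' {j | j ∈ S2}) :=
    fun δ => SG.sc_mono (Set.image_mono fun j hj => h02 hj) (hat00 δ)
  -- the weights
  set g1 : (Fin n → Bool) → ℝ := fun δ => μ1 (atomOf A S1 δ) with hg1
  set g2 : (Fin n → Bool) → ℝ := fun δ => μ2 (atomOf A S2 δ) with hg2
  set g0 : (Fin n → Bool) → ℝ := fun δ => μ1 (atomOf A (S1 ∩ S2) δ) with hg0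
  set f : (Fin n → Bool) → ℝ :=
    fun ε => g1 (pat S1 ε) * (g2 (pat S2 ε) * (g0 (pat (S1 ∩ S2) ε))⁻¹) with hf
  have hag : ∀ δ, μ1 (atomOf A (S1 ∩ S2) δ) = μ2 (atomOf A (S1 ∩ S2) δ) :=
    fun δ => hagree _ ⟨hat01 δ, hat02 δ⟩
  -- identify the pattern set of an `S1 ∩ S2`-atom, relative to Sb ⊇ S1 ∩ S2
  have hPT : ∀ (Sb : Finset (Fin n)), S1 ∩ S2 ⊆ Sb → ∀ δ0, pat (S1 ∩ S2) δ0 = δ0 →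
      ∀ hdep0 : (∀ δ ε : Fin n → Bool, (∀ j ∈ Sb, δ j = ε j) →
        (δ ∈ φ (atomOf A (S1 ∩ S2) δ0) ↔ ε ∈ φ (atomOf A (S1 ∩ S2) δ0))),
      PatSet φ Sb (atomOf A (S1 ∩ S2) δ0)
        = univ.filter (fun δ2 => pat Sb δ2 = δ2 ∧ pat (S1 ∩ S2) δ2 = δ0) := by
    intro Sb hsub δ0 hδ0 hdep0
    ext δ2
    rw [mem_PatSet hdep0, Finset.mem_filter]
    simp only [Finset.mem_univ, true_and]
    constructor
    · rintro ⟨hc, hm⟩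
      rw [phi_at A φ hφ] at hm
      refine ⟨hc, funext fun j => ?_⟩
      by_cases hj : j ∈ S1 ∩ S2
      · rw [pat_mem hj]; exact hm j hj
      · rw [pat_not_mem hj, ← hδ0, pat_not_mem hj]
    · rintro ⟨hc, h0⟩
      refine ⟨hc, ?_⟩
      rw [phi_at A φ hφ]
      intro j hj
      rw [← h0, pat_mem hj]
  -- the two marginal identities
  have hgb2 : ∀ δ0, pat (S1 ∩ S2) δ0 = δ0 →
      ∑ δ2 ∈ univ.filter (fun δ2 => pat S2 δ2 = δ2 ∧ pat (S1 ∩ S2) δ2 = δ0), g2 δ2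
        = g0 δ0 := by
    intro δ0 hδ0
    have hx2 := hat02 δ0
    have hd := decomp hφ (subset_refl S2) h2 hx2
    obtain ⟨hdep0, -⟩ := key A φ hφ S2 _ hx2
    rw [hPT S2 h02 δ0 hδ0 hdep0] at hd
    rw [← hd]
    exact (hag δ0).symm
  have hgb1 : ∀ δ0, pat (S1 ∩ S2) δ0 = δ0 →
      ∑ δ2 ∈ univ.filter (fun δ2 => pat S1 δ2 = δ2 ∧ pat (S1 ∩ S2) δ2 = δ0), g1 δ2
        = g0 δ0 := by
    intro δ0 hδ0
    have hx1 := hat01 δ0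
    have hd := decomp hφ (subset_refl S1) h1 hx1
    obtain ⟨hdep0, -⟩ := key A φ hφ S1 _ hx1
    rw [hPT S1 h01 δ0 hδ0 hdep0] at hd
    rw [← hd]
  -- the vanishing lemmas
  have hz1 : ∀ δ, pat S1 δ = δ → g0 (pat (S1 ∩ S2) δ) = 0 → g1 δ = 0 := by
    intro δ hδc h0
    have hx1 := hat01 (pat (S1 ∩ S2) δ)
    have hd := decomp hφ (subset_refl S1) h1 hx1
    obtain ⟨hdep0, -⟩ := key A φ hφ S1 _ hx1
    have hnn : ∀ δ' ∈ PatSet φ S1 (atomOf A (S1 ∩ S2) (pat (S1 ∩ S2) δ)),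
        0 ≤ μ1 (atomOf A S1 δ') := fun δ' _ => h1.1 _ (hat1 δ')
    have hδmem : δ ∈ PatSet φ S1 (atomOf A (S1 ∩ S2) (pat (S1 ∩ S2) δ)) := by
      rw [mem_PatSet hdep0]
      refine ⟨hδc, ?_⟩
      rw [phi_at A φ hφ]
      intro j hj
      rw [pat_mem hj]
    exact (Finset.sum_eq_zero_iff_of_nonneg hnn).mp (by rw [← hd]; exact h0) δ hδmem
  have hz2 : ∀ δ, pat S2 δ = δ → g0 (pat (S1 ∩ S2) δ) = 0 → g2 δ = 0 := by
    intro δ hδc h0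
    have hx2 := hat02 (pat (S1 ∩ S2) δ)
    have hd := decomp hφ (subset_refl S2) h2 hx2
    obtain ⟨hdep0, -⟩ := key A φ hφ S2 _ hx2
    have hnn : ∀ δ' ∈ PatSet φ S2 (atomOf A (S1 ∩ S2) (pat (S1 ∩ S2) δ)),
        0 ≤ μ2 (atomOf A S2 δ') := fun δ' _ => h2.1 _ (hat2 δ')
    have hδmem : δ ∈ PatSet φ S2 (atomOf A (S1 ∩ S2) (pat (S1 ∩ S2) δ)) := by
      rw [mem_PatSet hdep0]
      refine ⟨hδc, ?_⟩
      rw [phi_at A φ hφ]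
      intro j hj
      rw [pat_mem hj]
    refine (Finset.sum_eq_zero_iff_of_nonneg hnn).mp ?_ δ hδmem
    rw [← hd, ← hag]
    exact h0
  -- the two fiber-sum identities
  have hfib1 : ∀ δ, pat S1 δ = δ →
      ∑ ε ∈ univ.filter (fun ε => pat S1 ε = δ), f ε = g1 δ :=
    fun δ hδ => fiber_sum S1 S2 hU12 g1 g2 g0 hgb2 hz1 δ hδ
  have hfib2 : ∀ δ, pat S2 δ = δ →
      ∑ ε ∈ univ.filter (fun ε => pat S2 ε = δ), f ε = g2 δ := by
    intro δ hδ
    have hswap : ∀ ε : Fin n → Bool,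
        f ε = g2 (pat S2 ε) * (g1 (pat S1 ε) * (g0 (pat (S2 ∩ S1) ε))⁻¹) := by
      intro ε
      rw [h21, hf]
      ring
    calc ∑ ε ∈ univ.filter (fun ε => pat S2 ε = δ), f ε
        = ∑ ε ∈ univ.filter (fun ε => pat S2 ε = δ),
            g2 (pat S2 ε) * (g1 (pat S1 ε) * (g0 (pat (S2 ∩ S1) ε))⁻¹) :=
          Finset.sum_congr rfl fun ε _ => hswap ε
      _ = g2 δ := by
          refine fiber_sum S2 S1 hU21 g2 g1 g0 ?_ ?_ δ hδ
          · rw [h21]; exact hgb1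
          · rw [h21]; exact hz2
  -- nonnegativity of f
  have hf_nonneg : ∀ ε, 0 ≤ f ε := by
    intro ε
    refine mul_nonneg (h1.1 _ (hat1 _)) (mul_nonneg (h2.1 _ (hat2 _)) (inv_nonneg.mpr (h1.1 _ (hat01 _))))
  -- define the measure
  refine ⟨fun x => ∑ ε ∈ univ.filter (· ∈ φ x), f ε, ⟨?_, ?_, ?_⟩, ?_, ?_⟩
  · exact fun x => Finset.sum_nonneg fun ε _ => hf_nonneg ε
  · -- additivity
    intro x y hxy
    have hfil : univ.filter (· ∈ φ (x ⊔ y)) = univ.filter (· ∈ φ x) ∪ univ.filter (· ∈ φ y) := by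
      ext ε
      simp [map_sup, Set.sup_eq_union, Set.mem_union]
    have hdisj : Disjoint (univ.filter (· ∈ φ x)) (univ.filter (· ∈ φ y)) := by
      rw [Finset.disjoint_left]
      intro ε hεx hεy
      have : ε ∈ φ (x ⊓ y) := by
        rw [map_inf]
        exact ⟨(Finset.mem_filter.mp hεx).2, (Finset.mem_filter.mp hεy).2⟩
      rw [hxy, map_bot] at this
      exact this
    beta_reduce
    rw [hfil, Finset.sum_union hdisj]
  · -- normalization
    have h := ext_side hφ h1 f hfib1 ⊤ SG.sc_top
    beta_reduce
    rw [h, h1.2.2]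
  · exact ext_side hφ h1 f hfib1
  · exact ext_side hφ h2 f hfib2
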